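/- For every natural number k, the following identity of polynomials in ℤ[q] holds: Σ_{i=0}^{⌊(3k+1)/2⌋} (−1)^i · q^(i(i−1)/2) · [3k+1−i choose i]_q = (−1)^k · q^(k(3k+1)/2), where [m choose n]_q denotes the Gaussian (q-)binomial coefficient. -/
import Mathlib

open Polynomial Finset

noncomputable def gb : ℕ → ℕ → Polynomial ℤ
  | _, 0 => 1
  | 0, _+1 => 0
  | m+1, k+1 => gb m k + X ^ (k+1) * gb m (k+1)

lemma gb_m_zero (m : ℕ) : gb m 0 = 1 := by cases m <;> rfl

lemma gb_succ (m k : ℕ) : gb (m+1) (k+1) = gb m k + X ^ (k+1) * gb m (k+1) := rfl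

lemma gb_eq_zero : ∀ m k : ℕ, m < k → gb m k = 0 := by
  intro m
  induction m with
  | zero =>
    intro k hk
    obtain ⟨k, rfl⟩ := Nat.exists_eq_succ_of_ne_zero (by omega : k ≠ 0)
    rfl
  | succ m ih =>
    intro k hk
    obtain ⟨k, rfl⟩ := Nat.exists_eq_succ_of_ne_zero (by omega : k ≠ 0)
    rw [gb_succ, ih k (by omega), ih (k+1) (by omega)]
    ring

lemma gb_pascal2 : ∀ m k : ℕ, k ≤ m → gb (m+1) (k+1) = gb m (k+1) + X ^ (m-k) * gb m k := by
  intro m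
  induction m with
  | zero =>
    intro k hk
    interval_cases k
    simp [gb_succ, gb_m_zero, gb_eq_zero 0 1 (by omega)]
  | succ m ih =>
    intro k hk
    rcases Nat.lt_or_ge k (m+1) with h | h
    · -- k ≤ m
      have hkm : k ≤ m := by omega
      cases k with
      | zero =>
        conv_lhs => rw [gb_succ (m+1) 0, ih 0 (by omega)]
        conv_rhs => rw [gb_succ m 0]
        simp only [gb_m_zero]
        have e1 : m - 0 = m := by omega
        have e2 : m + 1 - 0 = m + 1 := by omega
        rw [e1, e2]
        ring
      | succ k' =>
        have hk'm : k' ≤ m := by omega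
        conv_lhs => rw [gb_succ (m+1) (k'+1), ih (k'+1) hkm, ih k' hk'm]
        conv_rhs => rw [gb_succ m (k'+1), gb_succ m k']
        obtain ⟨d, rfl⟩ : ∃ d, m = k' + 1 + d := ⟨m - (k'+1), by omega⟩
        have e1 : k' + 1 + d - (k' + 1) = d := by omega
        have e2 : k' + 1 + d - k' = d + 1 := by omega
        have e3 : k' + 1 + d + 1 - (k' + 1) = d + 1 := by omega
        rw [e1, e2, e3]
        ring
    · -- k = m+1
      have : k = m + 1 := by omega
      subst this
      conv_lhs => rw [gb_succ (m+1) (m+1)]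
      rw [gb_eq_zero (m+1) (m+2) (by omega)]
      have : m + 1 - (m + 1) = 0 := by omega
      rw [this]
      ring

lemma gb_prod : ∀ m k : ℕ, k ≤ m + 1 →
    gb m k * ∏ i ∈ Finset.range k, (1 - (X : Polynomial ℤ) ^ (i + 1)) =
      ∏ i ∈ Finset.range k, (1 - (X : Polynomial ℤ) ^ (m - i)) := by
  intro m
  induction m with
  | zero =>
    intro k hk
    interval_cases k
    · simp [gb_m_zero]
    · simp [gb_eq_zero 0 1 (by omega)]
  | succ m ih =>
    intro k hk
    cases k with
    | zero => simp [gb_m_zero]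
    | succ k' =>
      rcases Nat.lt_or_ge k' (m+1) with h | h
      · -- k' ≤ m
        have h1 := ih k' (by omega)
        have h2 := ih (k'+1) (by omega)
        rw [Finset.prod_range_succ, Finset.prod_range_succ] at h2
        have hXX : (X:Polynomial ℤ)^(k'+1) * X^(m-k') = X^(m+1) := by
          rw [← pow_add]; congr 1; omega
        rw [gb_succ, Finset.prod_range_succ, Finset.prod_range_succ']
        have hcong : ∏ i ∈ Finset.range k', (1 - (X:Polynomial ℤ)^(m+1-(i+1)))
            = ∏ i ∈ Finset.range k', (1 - (X:Polynomial ℤ)^(m-i)) := by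
          refine Finset.prod_congr rfl fun i _ => ?_
          have : m + 1 - (i + 1) = m - i := by omega
          rw [this]
        rw [hcong, Nat.sub_zero]
        linear_combination (1 - (X:Polynomial ℤ)^(k'+1)) * h1 + (X:Polynomial ℤ)^(k'+1) * h2
          - (∏ i ∈ Finset.range k', (1 - (X:Polynomial ℤ)^(m-i))) * hXX
      · -- k' = m+1
        have : k' = m + 1 := by omega
        subst this
        rw [gb_eq_zero (m+1) (m+2) (by omega), zero_mul]
        symm
        apply Finset.prod_eq_zero (Finset.self_mem_range_succ (m+1))
        have : m + 1 - (m + 1) = 0 := by omega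
        rw [this]
        simp

noncomputable def DD (n : ℕ) : Polynomial ℤ :=
  ∑ i ∈ Finset.range (n+1), (-1 : Polynomial ℤ)^i * X^(i.choose 2) * gb (n-i) i

noncomputable def EE (n : ℕ) : Polynomial ℤ :=
  ∑ i ∈ Finset.range (n+1), (-1 : Polynomial ℤ)^i * X^(i.choose 2 + i) * gb (n-i) i

lemma choose_two_succ (j : ℕ) : (j+1).choose 2 = j.choose 2 + j := by
  rw [Nat.choose_succ_succ, Nat.choose_one_right, Nat.add_comm]

-- extension lemmas
lemma DD_ext (n r : ℕ) (h : n ≤ r) :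
    DD n = ∑ i ∈ Finset.range (r+1), (-1 : Polynomial ℤ)^i * X^(i.choose 2) * gb (n-i) i := by
  rw [DD]
  apply Finset.sum_subset (Finset.range_subset_range.mpr (by omega))
  intro i hi hni
  simp only [Finset.mem_range] at hi hni
  rw [gb_eq_zero (n-i) i (by omega), mul_zero]

lemma EE_ext (n r : ℕ) (h : n ≤ r) :
    EE n = ∑ i ∈ Finset.range (r+1), (-1 : Polynomial ℤ)^i * X^(i.choose 2 + i) * gb (n-i) i := by
  rw [EE]
  apply Finset.sum_subset (Finset.range_subset_range.mpr (by omega))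
  intro i hi hni
  simp only [Finset.mem_range] at hi hni
  rw [gb_eq_zero (n-i) i (by omega), mul_zero]

lemma pascal_helper (n j : ℕ) :
    gb (n+1-j) (j+1) = gb (n-j) j + X^(j+1) * gb (n-j) (j+1) := by
  rcases le_or_gt j n with h | h
  · obtain ⟨d, rfl⟩ : ∃ d, n = j + d := ⟨n - j, by omega⟩
    have e1 : j + d + 1 - j = d + 1 := by omega
    have e2 : j + d - j = d := by omega
    rw [e1, e2, gb_succ]
  · have e2 : n - j = 0 := by omega
    rw [e2, gb_eq_zero (n+1-j) (j+1) (by omega), gb_eq_zero 0 j (by omega),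
      gb_eq_zero 0 (j+1) (by omega)]
    ring

lemma pascal2_helper (n j : ℕ) :
    gb (n+1-j) (j+1) = gb (n-j) (j+1) + X^(n-2*j) * gb (n-j) j := by
  rcases le_or_gt (2*j) n with h | h
  · have e1 : n + 1 - j = (n - j) + 1 := by omega
    have e2 : n - j - j = n - 2*j := by omega
    rw [e1, gb_pascal2 (n-j) j (by omega), e2]
  · rw [gb_eq_zero (n+1-j) (j+1) (by omega), gb_eq_zero (n-j) (j+1) (by omega),
      gb_eq_zero (n-j) j (by omega)]
    ring

lemma DD_rec (n : ℕ) : DD (n+2) = EE (n+1) - EE n := by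
  have key : ∀ j ∈ Finset.range (n+2),
      (-1 : Polynomial ℤ)^(j+1) * X^((j+1).choose 2) * gb (n+2-(j+1)) (j+1)
      = ((-1 : Polynomial ℤ)^(j+1) * X^((j+1).choose 2 + (j+1)) * gb (n-j) (j+1))
        + (-((-1 : Polynomial ℤ)^j * X^(j.choose 2 + j) * gb (n-j) j)) := by
    intro j _
    have e0 : n + 2 - (j+1) = n + 1 - j := by omega
    rw [e0, pascal_helper n j, choose_two_succ]
    ring
  have peel : DD (n+2)
      = (∑ j ∈ Finset.range (n+2),
          (-1 : Polynomial ℤ)^(j+1) * X^((j+1).choose 2) * gb (n+2-(j+1)) (j+1))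
        + (-1 : Polynomial ℤ)^0 * X^((0:ℕ).choose 2) * gb (n+2-0) 0 := by
    rw [DD, Finset.sum_range_succ']
  rw [peel, Finset.sum_congr rfl key, Finset.sum_add_distrib]
  have hE1 : ∑ j ∈ Finset.range (n+2),
      (-1 : Polynomial ℤ)^(j+1) * X^((j+1).choose 2 + (j+1)) * gb (n-j) (j+1)
      = EE (n+1) - 1 := by
    have : EE (n+1)
        = (∑ j ∈ Finset.range (n+2),
            (-1 : Polynomial ℤ)^(j+1) * X^((j+1).choose 2 + (j+1)) * gb (n+1-(j+1)) (j+1))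
          + (-1 : Polynomial ℤ)^0 * X^((0:ℕ).choose 2 + 0) * gb (n+1-0) 0 := by
      rw [EE_ext (n+1) (n+2) (by omega), Finset.sum_range_succ']
    rw [this]
    have : ∀ j ∈ Finset.range (n+2),
        (-1 : Polynomial ℤ)^(j+1) * X^((j+1).choose 2 + (j+1)) * gb (n+1-(j+1)) (j+1)
        = (-1 : Polynomial ℤ)^(j+1) * X^((j+1).choose 2 + (j+1)) * gb (n-j) (j+1) := by
      intro j _
      have : n + 1 - (j+1) = n - j := by omega
      rw [this]
    rw [Finset.sum_congr rfl this]
    simp [gb_m_zero]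
  have hE2 : ∑ j ∈ Finset.range (n+2),
      -((-1 : Polynomial ℤ)^j * X^(j.choose 2 + j) * gb (n-j) j) = -EE n := by
    rw [Finset.sum_neg_distrib, EE_ext n (n+1) (by omega)]
  rw [hE1, hE2]
  simp [gb_m_zero]
  ring

lemma EE_rec (n : ℕ) : EE (n+2) = EE (n+1) - X^(n+1) * DD n := by
  have key : ∀ j ∈ Finset.range (n+2),
      (-1 : Polynomial ℤ)^(j+1) * X^((j+1).choose 2 + (j+1)) * gb (n+2-(j+1)) (j+1)
      = ((-1 : Polynomial ℤ)^(j+1) * X^((j+1).choose 2 + (j+1)) * gb (n-j) (j+1))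
        + (-(X^(n+1) * ((-1 : Polynomial ℤ)^j * X^(j.choose 2) * gb (n-j) j))) := by
    intro j _
    have e0 : n + 2 - (j+1) = n + 1 - j := by omega
    rw [e0, pascal2_helper n j, choose_two_succ]
    rcases le_or_gt (2*j) n with h | h
    · obtain ⟨d, rfl⟩ : ∃ d, n = 2*j + d := ⟨n - 2*j, by omega⟩
      have e1 : 2*j + d - j = j + d := by omega
      have e2 : 2*j + d - 2*j = d := by omega
      rw [e1, e2]
      ring
    · rw [gb_eq_zero (n-j) (j+1) (by omega), gb_eq_zero (n-j) j (by omega)]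
      ring
  have peel : EE (n+2)
      = (∑ j ∈ Finset.range (n+2),
          (-1 : Polynomial ℤ)^(j+1) * X^((j+1).choose 2 + (j+1)) * gb (n+2-(j+1)) (j+1))
        + (-1 : Polynomial ℤ)^0 * X^((0:ℕ).choose 2 + 0) * gb (n+2-0) 0 := by
    rw [EE, Finset.sum_range_succ']
  rw [peel, Finset.sum_congr rfl key, Finset.sum_add_distrib]
  have hE1 : ∑ j ∈ Finset.range (n+2),
      (-1 : Polynomial ℤ)^(j+1) * X^((j+1).choose 2 + (j+1)) * gb (n-j) (j+1)
      = EE (n+1) - 1 := by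
    have : EE (n+1)
        = (∑ j ∈ Finset.range (n+2),
            (-1 : Polynomial ℤ)^(j+1) * X^((j+1).choose 2 + (j+1)) * gb (n+1-(j+1)) (j+1))
          + (-1 : Polynomial ℤ)^0 * X^((0:ℕ).choose 2 + 0) * gb (n+1-0) 0 := by
      rw [EE_ext (n+1) (n+2) (by omega), Finset.sum_range_succ']
    rw [this]
    have : ∀ j ∈ Finset.range (n+2),
        (-1 : Polynomial ℤ)^(j+1) * X^((j+1).choose 2 + (j+1)) * gb (n+1-(j+1)) (j+1)
        = (-1 : Polynomial ℤ)^(j+1) * X^((j+1).choose 2 + (j+1)) * gb (n-j) (j+1) := by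
      intro j _
      have : n + 1 - (j+1) = n - j := by omega
      rw [this]
    rw [Finset.sum_congr rfl this]
    simp [gb_m_zero]
  have hE2 : ∑ j ∈ Finset.range (n+2),
      -(X^(n+1) * ((-1 : Polynomial ℤ)^j * X^(j.choose 2) * gb (n-j) j))
      = -(X^(n+1) * DD n) := by
    rw [Finset.sum_neg_distrib, ← Finset.mul_sum, DD_ext n (n+1) (by omega)]
  rw [hE1, hE2]
  simp [gb_m_zero]
  ring

lemma DD_rec3 (n : ℕ) : DD (n+3) = -(X^(n+1) * DD n) := by
  have h1 := DD_rec (n+1)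
  have h2 := EE_rec n
  rw [show n+1+2 = n+3 by omega] at h1
  rw [h1, h2]
  ring

def TT : ℕ → ℕ
  | 0 => 0
  | k+1 => TT k + (3*k+2)

lemma TT_eq (k : ℕ) : 2 * TT k = k * (3*k+1) := by
  induction k with
  | zero => rfl
  | succ k ih =>
    show 2 * (TT k + (3*k+2)) = (k+1) * (3*(k+1)+1)
    rw [Nat.mul_add, ih]
    ring

lemma DD_main (k : ℕ) : DD (3*k+1) = (-1 : Polynomial ℤ)^k * X^(TT k) := by
  induction k with
  | zero =>
    show DD 1 = (-1 : Polynomial ℤ)^0 * X^(TT 0)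
    rw [DD]
    rw [Finset.sum_range_succ, Finset.sum_range_succ, Finset.sum_range_zero]
    norm_num [gb_m_zero, gb_eq_zero 0 1 (by omega), TT]
  | succ k ih =>
    have h3 : 3*(k+1)+1 = (3*k+1)+3 := by ring
    rw [h3, DD_rec3 (3*k+1), ih]
    show -(X ^ (3*k+1+1) * ((-1:Polynomial ℤ)^k * X^(TT k))) = (-1)^(k+1) * X^(TT k + (3*k+2))
    ring

theorem gauss_alternating_sum_three_k_plus_one
    (G : ℕ → ℕ → Polynomial ℤ)
    (hG : ∀ m k : ℕ, k ≤ m →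
      G m k * ∏ i ∈ Finset.range k, (1 - (X : Polynomial ℤ) ^ (i + 1)) =
        ∏ i ∈ Finset.range k, (1 - (X : Polynomial ℤ) ^ (m - i)))
    (hG0 : ∀ m k : ℕ, m < k → G m k = 0)
    (k : ℕ) :
    ∑ i ∈ Finset.range ((3 * k + 1) / 2 + 1),
        (-1 : Polynomial ℤ) ^ i * X ^ (i * (i - 1) / 2) * G (3 * k + 1 - i) i =
      (-1 : Polynomial ℤ) ^ k * X ^ (k * (3 * k + 1) / 2) := by
  have hGg : ∀ m k : ℕ, G m k = gb m k := by
    intro m k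
    rcases le_or_gt k m with h | h
    · have hne : (∏ i ∈ Finset.range k, (1 - (X : Polynomial ℤ) ^ (i + 1))) ≠ 0 := by
        apply Finset.prod_ne_zero_iff.mpr
        intro i _
        intro hzero
        have h1 : (1 - (X : Polynomial ℤ) ^ (i + 1)).coeff (i+1) = 0 := by rw [hzero]; simp
        rw [coeff_sub, coeff_X_pow] at h1
        simp [Polynomial.coeff_one] at h1
      apply mul_right_cancel₀ hne
      rw [hG m k h, gb_prod m k (by omega)]
    · rw [hG0 m k h, gb_eq_zero m k h]
  have hsum : ∑ i ∈ Finset.range ((3 * k + 1) / 2 + 1),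
      (-1 : Polynomial ℤ) ^ i * X ^ (i * (i - 1) / 2) * G (3 * k + 1 - i) i
      = DD (3*k+1) := by
    rw [DD_ext (3*k+1) (3*k+1) (le_refl _)]
    rw [Finset.sum_subset (Finset.range_subset_range.mpr (by omega : (3*k+1)/2+1 ≤ 3*k+1+1))]
    · apply Finset.sum_congr rfl
      intro i _
      rw [hGg, Nat.choose_two_right]
    · intro i hi hni
      simp only [Finset.mem_range] at hi hni
      rw [hGg, gb_eq_zero (3*k+1-i) i (by omega), mul_zero]
  rw [hsum, DD_main k]
  congr 1
  have h := TT_eq k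
  congr 1
  generalize hm : k * (3*k+1) = m at h ⊢
  omega
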